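/- Let G be an n×n row-stochastic matrix, let μ, μ̂ ∈ ℝ^n be positive vectors, and for c > 0 define α(c) ∈ ℝ^n by α(c)ᵢ = 1 − c·μᵢ/μ̂ᵢ and Δ(α(c)) := D(α(c))(I − G). Let c* := 1 / maxᵢ(μᵢ/μ̂ᵢ). Then for all c, c' with 0 < c ≤ c' ≤ c*: 0 ≤ α(c')ᵢ ≤ α(c)ᵢ < 1 for every i, and |Δ(α(c'))_{i,j}| ≤ |Δ(α(c))_{i,j}| for all i, j. Consequently, among all these perturbations, Δ(α(c*)) minimizes every monotone matrix norm (a norm ‖·‖ with |A| ≤ |B| entrywise implying ‖A‖ ≤ ‖B‖). -/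
import Mathlib


open Matrix BigOperators

/-- For `0 < c ≤ c' ≤ c* = 1 / maxᵢ (μᵢ/μ̂ᵢ)`, with
`α(c)ᵢ = 1 − c·μᵢ/μ̂ᵢ` and `Δ(α(c)) = D(α(c))(I − G)`, one has
`0 ≤ α(c')ᵢ ≤ α(c)ᵢ < 1` and `|Δ(α(c'))_{ij}| ≤ |Δ(α(c))_{ij}|`; consequently
`Δ(α(c*))` minimizes every monotone matrix norm among these perturbations. -/
theorem stmt4 {n : ℕ} (G : Matrix (Fin n) (Fin n) ℝ)
    (hGnonneg : ∀ i j, 0 ≤ G i j) (hGrow : ∀ i, ∑ j, G i j = 1)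
    (μ μh : Fin n → ℝ) (hμpos : ∀ i, 0 < μ i) (hμhpos : ∀ i, 0 < μh i)
    (cstar : ℝ) (hcstar : cstar = 1 / (⨆ i, μ i / μh i))
    (α : ℝ → Fin n → ℝ) (hα : ∀ c i, α c i = 1 - c * (μ i / μh i)) :
    (∀ c c' : ℝ, 0 < c → c ≤ c' → c' ≤ cstar →
      (∀ i, 0 ≤ α c' i ∧ α c' i ≤ α c i ∧ α c i < 1) ∧
      (∀ i j, |(Matrix.diagonal (α c') * (1 - G)) i j| ≤
        |(Matrix.diagonal (α c) * (1 - G)) i j|)) ∧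
    (∀ N : Matrix (Fin n) (Fin n) ℝ → ℝ,
      (∀ A B : Matrix (Fin n) (Fin n) ℝ,
        (∀ i j, |A i j| ≤ |B i j|) → N A ≤ N B) →
      ∀ c : ℝ, 0 < c → c ≤ cstar →
        N (Matrix.diagonal (α cstar) * (1 - G)) ≤
          N (Matrix.diagonal (α c) * (1 - G))) := by
  have key : ∀ c c' : ℝ, 0 < c → c ≤ c' → c' ≤ cstar →
      (∀ i, 0 ≤ α c' i ∧ α c' i ≤ α c i ∧ α c i < 1) ∧
      (∀ i j, |(Matrix.diagonal (α c') * (1 - G)) i j| ≤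
        |(Matrix.diagonal (α c) * (1 - G)) i j|) := by
    intro c c' hc hcc' hc'star
    have hαbounds : ∀ i, 0 ≤ α c' i ∧ α c' i ≤ α c i ∧ α c i < 1 := by
      intro i
      have hratio : 0 < μ i / μh i := div_pos (hμpos i) (hμhpos i)
      have hS : μ i / μh i ≤ ⨆ j, μ j / μh j :=
        le_ciSup (f := fun j => μ j / μh j) (Set.Finite.bddAbove (Set.finite_range _)) i
      have hSpos : 0 < ⨆ j, μ j / μh j := lt_of_lt_of_le hratio hS
      have h1 : c' * (μ i / μh i) ≤ 1 := by
        calc c' * (μ i / μh i) ≤ c' * (⨆ j, μ j / μh j) :=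
              mul_le_mul_of_nonneg_left hS (le_of_lt (lt_of_lt_of_le hc hcc'))
          _ ≤ (1 / (⨆ j, μ j / μh j)) * (⨆ j, μ j / μh j) := by
              apply mul_le_mul_of_nonneg_right _ hSpos.le
              rw [← hcstar]; exact hc'star
          _ = 1 := by field_simp
      refine ⟨?_, ?_, ?_⟩
      · rw [hα]; linarith
      · rw [hα, hα]
        have : c * (μ i / μh i) ≤ c' * (μ i / μh i) :=
          mul_le_mul_of_nonneg_right hcc' hratio.le
        linarith
      · rw [hα]; nlinarith
    refine ⟨hαbounds, fun i j => ?_⟩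
    have h1 := (hαbounds i).1
    have h2 := (hαbounds i).2.1
    rw [Matrix.diagonal_mul, Matrix.diagonal_mul, abs_mul, abs_mul,
      abs_of_nonneg h1, abs_of_nonneg (le_trans h1 h2)]
    exact mul_le_mul_of_nonneg_right h2 (abs_nonneg _)
  refine ⟨key, fun N hN c hc hcs => ?_⟩
  exact hN _ _ (key c cstar hc hcs le_rfl).2
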